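/- Let M be a measurable subset of (0,1]×(0,1] ⊆ ℝ² whose two-dimensional Lebesgue measure satisfies λ₂(M) > 2/3. Then there exist real numbers x₁ < x₂ < x₃ and y₁ < y₂ < y₃ such that all nine points (xᵢ, yⱼ), for i,j ∈ {1,2,3}, belong to M. -/

import Mathlib

open MeasureTheory Set
open scoped ENNReal

lemma three_of_infinite (s : Set ℝ) (hs : s.Infinite) :
    ∃ x₁ x₂ x₃, x₁ ∈ s ∧ x₂ ∈ s ∧ x₃ ∈ s ∧ x₁ < x₂ ∧ x₂ < x₃ := by
  obtain ⟨a, ha, b, hb, hab⟩ := hs.nontrivial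
  obtain ⟨c, hcs, hc'⟩ := (hs.diff (Set.toFinite {a, b})).nonempty
  have hca : c ≠ a := fun h => hc' (by simp [h])
  have hcb : c ≠ b := fun h => hc' (by simp [h])
  rcases lt_trichotomy a b with h1 | h1 | h1
  · rcases lt_trichotomy c a with h2 | h2 | h2
    · exact ⟨c, a, b, hcs, ha, hb, h2, h1⟩
    · exact absurd h2 hca
    · rcases lt_trichotomy c b with h3 | h3 | h3
      · exact ⟨a, c, b, ha, hcs, hb, h2, h3⟩
      · exact absurd h3 hcb
      · exact ⟨a, b, c, ha, hb, hcs, h1, h3⟩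
  · exact absurd h1 hab
  · rcases lt_trichotomy c b with h2 | h2 | h2
    · exact ⟨c, b, a, hcs, hb, ha, h2, h1⟩
    · exact absurd h2 hcb
    · rcases lt_trichotomy c a with h3 | h3 | h3
      · exact ⟨b, c, a, hb, hcs, ha, h2, h3⟩
      · exact absurd h3 hca
      · exact ⟨b, a, c, hb, ha, hcs, h1, h3⟩

theorem stmt_8
    (M : Set (ℝ × ℝ)) (hMmeas : MeasurableSet M)
    (hMsub : M ⊆ Ioc (0 : ℝ) 1 ×ˢ Ioc (0 : ℝ) 1)
    (hMvol : (2 : ℝ≥0∞) / 3 < volume M) :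
    ∃ x₁ x₂ x₃ y₁ y₂ y₃ : ℝ, x₁ < x₂ ∧ x₂ < x₃ ∧ y₁ < y₂ ∧ y₂ < y₃ ∧
      (x₁, y₁) ∈ M ∧ (x₁, y₂) ∈ M ∧ (x₁, y₃) ∈ M ∧
      (x₂, y₁) ∈ M ∧ (x₂, y₂) ∈ M ∧ (x₂, y₃) ∈ M ∧
      (x₃, y₁) ∈ M ∧ (x₃, y₂) ∈ M ∧ (x₃, y₃) ∈ M := by
  -- strips
  set S : Set (ℝ × ℝ) := Ioc (0:ℝ) 1 ×ˢ Ioc (0:ℝ) (1/3) with hSdef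
  set S₁ : Set (ℝ × ℝ) := Ioc (0:ℝ) 1 ×ˢ Ioc (1/3 : ℝ) (2/3) with hS1def
  set S₂ : Set (ℝ × ℝ) := Ioc (0:ℝ) 1 ×ˢ Ioc (2/3 : ℝ) 1 with hS2def
  have hSm : MeasurableSet S := measurableSet_Ioc.prod measurableSet_Ioc
  have hS1m : MeasurableSet S₁ := measurableSet_Ioc.prod measurableSet_Ioc
  have hS2m : MeasurableSet S₂ := measurableSet_Ioc.prod measurableSet_Ioc
  -- translation maps
  have mf : ∀ c : ℝ, Measurable (fun p : ℝ × ℝ => (p.1, p.2 + c)) :=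
    fun c => measurable_fst.prodMk (measurable_snd.add_const c)
  have mp : ∀ c : ℝ, MeasurePreserving (fun p : ℝ × ℝ => (p.1, p.2 + c)) volume volume := by
    intro c
    have h := (MeasurePreserving.id (volume : Measure ℝ)).prod
      (measurePreserving_add_right (volume : Measure ℝ) c)
    rw [← Measure.volume_eq_prod ℝ ℝ] at h
    exact h
  set A : Set (ℝ × ℝ) := M ∩ S with hAdef
  set B : Set (ℝ × ℝ) := (fun p : ℝ × ℝ => (p.1, p.2 + 1/3)) ⁻¹' (M ∩ S₁) with hBdef
  set C : Set (ℝ × ℝ) := (fun p : ℝ × ℝ => (p.1, p.2 + 2/3)) ⁻¹' (M ∩ S₂) with hCdef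
  have hAm : MeasurableSet A := hMmeas.inter hSm
  have hBm : MeasurableSet B := mf _ (hMmeas.inter hS1m)
  have hCm : MeasurableSet C := mf _ (hMmeas.inter hS2m)
  have hAS : A ⊆ S := inter_subset_right
  have hBS : B ⊆ S := by
    rintro ⟨x, y⟩ ⟨hM', hstrip⟩
    refine ⟨(hMsub hM').1, ?_, ?_⟩
    · have := hstrip.2.1; simpa using by linarith
    · have := hstrip.2.2; linarith
  have hCS : C ⊆ S := by
    rintro ⟨x, y⟩ ⟨hM', hstrip⟩
    refine ⟨(hMsub hM').1, ?_, ?_⟩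
    · have := hstrip.2.1; linarith
    · have := hstrip.2.2; linarith
  have hvolS : volume S = 1/3 := by
    rw [hSdef, Measure.volume_eq_prod ℝ ℝ, Measure.prod_prod, Real.volume_Ioc, Real.volume_Ioc]
    norm_num
    rw [ENNReal.ofReal_div_of_pos (by norm_num)]
    norm_num
  -- measures of B and C
  have hvolB : volume B = volume (M ∩ S₁) := (mp (1/3)).measure_preimage (hMmeas.inter hS1m).nullMeasurableSet
  have hvolC : volume C = volume (M ∩ S₂) := (mp (2/3)).measure_preimage (hMmeas.inter hS2m).nullMeasurableSet
  -- M covered by the three strip pieces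
  have hMcover : M ⊆ A ∪ (M ∩ S₁) ∪ (M ∩ S₂) := by
    rintro ⟨x, y⟩ hp
    have hx := (hMsub hp).1
    have hy := (hMsub hp).2
    rcases le_or_gt y (1/3) with h | h
    · exact Or.inl (Or.inl ⟨hp, hx, hy.1, h⟩)
    · rcases le_or_gt y (2/3) with h' | h'
      · exact Or.inl (Or.inr ⟨hp, hx, h, h'⟩)
      · exact Or.inr ⟨hp, hx, h', hy.2⟩
  have hMle : volume M ≤ volume A + volume B + volume C := by
    calc volume M ≤ volume (A ∪ (M ∩ S₁) ∪ (M ∩ S₂)) := measure_mono hMcover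
      _ ≤ volume A + volume (M ∩ S₁) + volume (M ∩ S₂) :=
        le_trans (measure_union_le _ _) (add_le_add_left (measure_union_le _ _) _)
      _ = volume A + volume B + volume C := by rw [hvolB, hvolC]
  set N : Set (ℝ × ℝ) := A ∩ (B ∩ C) with hNdef
  have hNm : MeasurableSet N := hAm.inter (hBm.inter hCm)
  -- N has positive measure
  have hNpos : volume N ≠ 0 := by
    intro hN0
    have hcov : S ⊆ (S \ A) ∪ ((S \ B) ∪ ((S \ C) ∪ N)) := by
      intro p hp
      by_cases hA : p ∈ A
      · by_cases hB : p ∈ B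
        · by_cases hC : p ∈ C
          · exact Or.inr (Or.inr (Or.inr ⟨hA, hB, hC⟩))
          · exact Or.inr (Or.inr (Or.inl ⟨hp, hC⟩))
        · exact Or.inr (Or.inl ⟨hp, hB⟩)
      · exact Or.inl ⟨hp, hA⟩
    have hSle : volume S ≤ volume (S \ A) + (volume (S \ B) + (volume (S \ C) + volume N)) :=
      le_trans (measure_mono hcov) (le_trans (measure_union_le _ _)
        (add_le_add_right (le_trans (measure_union_le _ _)
          (add_le_add_right (measure_union_le _ _) _)) _))
    rw [hN0, add_zero] at hSle
    have eA : volume A + volume (S \ A) = volume S := by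
      have := measure_inter_add_diff (μ := volume) S hAm
      rwa [inter_eq_right.mpr hAS] at this
    have eB : volume B + volume (S \ B) = volume S := by
      have := measure_inter_add_diff (μ := volume) S hBm
      rwa [inter_eq_right.mpr hBS] at this
    have eC : volume C + volume (S \ C) = volume S := by
      have := measure_inter_add_diff (μ := volume) S hCm
      rwa [inter_eq_right.mpr hCS] at this
    have key : volume S + volume M ≤ volume S + volume S + volume S := by
      calc volume S + volume M
          ≤ (volume (S \ A) + (volume (S \ B) + volume (S \ C)))
            + (volume A + volume B + volume C) := add_le_add hSle hMle
        _ = (volume A + volume (S \ A)) + ((volume B + volume (S \ B))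
            + (volume C + volume (S \ C))) := by ring
        _ = volume S + volume S + volume S := by rw [eA, eB, eC]; ring
    rw [hvolS] at key
    have h13 : (1:ℝ≥0∞)/3 ≠ ⊤ := by simp
    have hlt : (1:ℝ≥0∞)/3 + 2/3 < 1/3 + volume M := by
      exact ENNReal.add_lt_add_left h13 hMvol
    have h1 : (1:ℝ≥0∞)/3 + 2/3 = 1 := by
      rw [ENNReal.div_add_div_same]
      norm_num
      exact ENNReal.div_self (by norm_num) (by norm_num)
    have h2 : (1:ℝ≥0∞)/3 + 1/3 + 1/3 = 1 := by
      rw [ENNReal.div_add_div_same, ENNReal.div_add_div_same]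
      norm_num
      exact ENNReal.div_self (by norm_num) (by norm_num)
    rw [h1] at hlt
    rw [h2] at key
    exact absurd (lt_of_lt_of_le hlt key) (lt_irrefl _)
  -- find a slice of positive measure
  have hN'm : MeasurableSet (Prod.swap ⁻¹' N : Set (ℝ × ℝ)) := hNm.preimage measurable_swap
  have hswap : volume (Prod.swap ⁻¹' N : Set (ℝ × ℝ)) = volume N := by
    have h := (Measure.measurePreserving_swap (μ := (volume : Measure ℝ)) (ν := (volume : Measure ℝ)))
    rw [← Measure.volume_eq_prod ℝ ℝ] at h
    exact h.measure_preimage hNm.nullMeasurableSet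
  have hslice : ∃ y : ℝ, volume {x : ℝ | (x, y) ∈ N} ≠ 0 := by
    by_contra h
    push_neg at h
    apply hNpos
    rw [← hswap, Measure.volume_eq_prod ℝ ℝ, Measure.measure_prod_null hN'm]
    exact Filter.Eventually.of_forall (fun y => h y)
  obtain ⟨y, hy⟩ := hslice
  have hinf : {x : ℝ | (x, y) ∈ N}.Infinite := by
    intro hfin
    exact hy (hfin.measure_zero volume)
  obtain ⟨x₁, x₂, x₃, h1, h2, h3, h12, h23⟩ := three_of_infinite _ hinf
  refine ⟨x₁, x₂, x₃, y, y + 1/3, y + 2/3, h12, h23, by linarith, by linarith,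
    h1.1.1, h1.2.1.1, h1.2.2.1, h2.1.1, h2.2.1.1, h2.2.2.1, h3.1.1, h3.2.1.1, h3.2.2.1⟩
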